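/- Given an integer r ≥ 3, natural numbers n_1, ..., n_r, and real numbers σ_2, ..., σ_{r-1} with s_* + σ_i ≠ 0 for each i, where s_* = 2(n_1 + n_r + 2), define 𝓘(κ) as below. Then (-κ)^{n_r+1} · e^{κ s_*} · 𝓘(κ) tends to n_r! · (-1)^{n_r} · s_*^{n_1} · (2n_r + 2) · ∏_{i=2}^{r-1} (s_* + σ_i)^{n_i} as κ → -∞. In particular, for all sufficiently negative κ, the sign of 𝓘(κ) equals the sign of (-1)^{n_r} · ∏_{i=2}^{r-1} (s_* + σ_i)^{n_i}. -/

import Mathlib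

open MeasureTheory Filter Set

lemma watson_aux (s : ℝ) (hs : 0 < s) (m : ℕ) (h : ℝ → ℝ) (hc : Continuous h) :
    Tendsto (fun l : ℝ => l ^ (m+1) * ∫ t in (0:ℝ)..s, Real.exp (-(l*t)) * t^m * h t)
      atTop (nhds ((m.factorial : ℝ) * h 0)) := by
  obtain ⟨C, hC⟩ := (isCompact_Icc (a := (0:ℝ)) (b := s)).exists_bound_of_continuousOn
    hc.continuousOn
  set C' : ℝ := max C 0 with hC'
  have hC'0 : 0 ≤ C' := le_max_right _ _
  have hC'' : ∀ x ∈ Icc (0:ℝ) s, |h x| ≤ C' := fun x hx =>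
    le_trans (hC x hx) (le_max_left _ _)
  set F : ℝ → ℝ → ℝ := fun l u =>
    (Ioc (0:ℝ) (l*s)).indicator (fun u => Real.exp (-u) * u^m * h (u/l)) u with hF
  -- key equality for l ≥ 1
  have key : ∀ l : ℝ, 1 ≤ l →
      l ^ (m+1) * ∫ t in (0:ℝ)..s, Real.exp (-(l*t)) * t^m * h t
        = ∫ u in Set.Ioi (0:ℝ), F l u := by
    intro l hl
    have hl0 : (0:ℝ) < l := lt_of_lt_of_le one_pos hl
    have h1 := intervalIntegral.integral_comp_mul_left (a := (0:ℝ)) (b := s)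
      (fun u => Real.exp (-u) * u^m * h (u/l)) hl0.ne'
    have h2 : (fun t : ℝ => Real.exp (-(l*t)) * (l*t)^m * h ((l*t)/l))
        = fun t : ℝ => l^m * (Real.exp (-(l*t)) * t^m * h t) := by
      funext t
      rw [mul_div_cancel_left₀ _ hl0.ne', mul_pow]
      ring
    rw [h2] at h1
    rw [intervalIntegral.integral_const_mul] at h1
    have h3 : ∫ u in (l*0)..(l*s), Real.exp (-u) * u^m * h (u/l)
        = l * (l^m * ∫ t in (0:ℝ)..s, Real.exp (-(l*t)) * t^m * h t) := by
      rw [h1, smul_eq_mul]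
      field_simp
    have h4 : ∫ u in (l*0)..(l*s), Real.exp (-u) * u^m * h (u/l)
        = ∫ u in Set.Ioi (0:ℝ), F l u := by
      rw [mul_zero, intervalIntegral.integral_of_le (by positivity),
        hF, MeasureTheory.setIntegral_indicator measurableSet_Ioc,
        Set.inter_eq_self_of_subset_right Set.Ioc_subset_Ioi_self]
    rw [← h4, h3]
    ring
  -- limit integral
  have hint : ∀ l : ℝ, Continuous (fun u : ℝ => Real.exp (-u) * u^m * h (u/l)) := by
    intro l
    exact ((Real.continuous_exp.comp continuous_neg).mul (continuous_pow m)).mul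
      (hc.comp (continuous_id.div_const l))
  have hbound_int : Integrable (fun u : ℝ => C' * (Real.exp (-u) * u^m))
      (volume.restrict (Set.Ioi (0:ℝ))) := by
    have := Real.GammaIntegral_convergent (s := (m:ℝ)+1) (by positivity)
    have heq : EqOn (fun x : ℝ => Real.exp (-x) * x ^ ((m:ℝ)+1-1))
        (fun x : ℝ => Real.exp (-x) * x ^ m) (Set.Ioi 0) := by
      intro x hx
      simp only [add_sub_cancel_right]
      rw [Real.rpow_natCast]
    exact ((this.congr_fun heq measurableSet_Ioi)).const_mul C'
  -- dominated convergence
  have hdc : Tendsto (fun l : ℝ => ∫ u in Set.Ioi (0:ℝ), F l u) atTop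
      (nhds (∫ u in Set.Ioi (0:ℝ), Real.exp (-u) * u^m * h 0)) := by
    apply MeasureTheory.tendsto_integral_filter_of_dominated_convergence
      (fun u => C' * (Real.exp (-u) * u^m))
    · filter_upwards with l
      exact ((hint l).aestronglyMeasurable.indicator measurableSet_Ioc).restrict
    · filter_upwards [eventually_ge_atTop (1:ℝ)] with l hl
      rw [MeasureTheory.ae_restrict_iff' measurableSet_Ioi]
      filter_upwards with u hu
      have hl0 : (0:ℝ) < l := lt_of_lt_of_le one_pos hl
      have hu0 : 0 < u := hu
      by_cases huc : u ∈ Ioc (0:ℝ) (l*s)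
      · rw [hF]
        simp only [Set.indicator_of_mem huc]
        have hmem : u/l ∈ Icc (0:ℝ) s :=
          ⟨by positivity, (div_le_iff₀ hl0).2 (by linarith [huc.2])⟩
        calc ‖Real.exp (-u) * u^m * h (u/l)‖
            = (Real.exp (-u) * u^m) * |h (u/l)| := by
              rw [Real.norm_eq_abs, abs_mul, abs_of_nonneg (by positivity)]
          _ ≤ (Real.exp (-u) * u^m) * C' :=
              mul_le_mul_of_nonneg_left (hC'' _ hmem) (by positivity)
          _ = C' * (Real.exp (-u) * u^m) := by ring
      · rw [hF]
        simp only [Set.indicator_of_notMem huc]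
        simp only [norm_zero]
        positivity
    · exact hbound_int
    · rw [MeasureTheory.ae_restrict_iff' measurableSet_Ioi]
      filter_upwards with u hu
      have hu0 : 0 < u := hu
      have hev : ∀ᶠ l : ℝ in atTop, F l u = Real.exp (-u) * u^m * h (u/l) := by
        filter_upwards [eventually_gt_atTop (u/s)] with l hl
        have : u < l * s := by
          rw [div_lt_iff₀ hs] at hl; linarith
        rw [hF]
        exact Set.indicator_of_mem (Set.mem_Ioc.2 ⟨hu0, this.le⟩) _
      apply Tendsto.congr' (hev.mono fun l hl => hl.symm)
      have hdiv : Tendsto (fun l : ℝ => u/l) atTop (nhds 0) :=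
        Tendsto.div_atTop tendsto_const_nhds tendsto_id
      have := (hc.continuousAt (x := 0)).tendsto.comp hdiv
      simpa using tendsto_const_nhds.mul this
  have hval : (∫ u in Set.Ioi (0:ℝ), Real.exp (-u) * u^m * h 0)
      = (m.factorial : ℝ) * h 0 := by
    rw [MeasureTheory.integral_mul_const]
    congr 1
    have := Real.Gamma_eq_integral (s := (m:ℝ)+1) (by positivity)
    rw [show ((m:ℝ)+1) = ((m:ℕ):ℝ)+1 by norm_num, Real.Gamma_nat_eq_factorial] at this
    rw [this]
    apply MeasureTheory.setIntegral_congr_fun measurableSet_Ioi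
    intro x hx
    simp only [add_sub_cancel_right]
    rw [Real.rpow_natCast]
  rw [← hval]
  apply Tendsto.congr' _ hdc
  filter_upwards [eventually_ge_atTop (1:ℝ)] with l hl
  exact (key l hl).symm

/-- Asymptotics of the invariant integral `𝓘(κ)` as `κ → -∞`:
`(-κ)^{n_r+1} e^{κ s_*} 𝓘(κ) → n_r! (-1)^{n_r} s_*^{n₁} (2n_r+2) ∏ (s_*+σᵢ)^{nᵢ}`,
so for sufficiently negative `κ` the sign of `𝓘(κ)` is that of
`(-1)^{n_r} ∏ (s_*+σᵢ)^{nᵢ}`. -/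
theorem stmt_5 (r : ℕ) (hr : 3 ≤ r) (n : ℕ → ℕ) (σ : ℕ → ℝ)
    (sstar : ℝ) (hsstar : sstar = 2 * ((n 1 : ℝ) + (n r : ℝ) + 2))
    (hσ : ∀ i ∈ Finset.Icc 2 (r - 1), sstar + σ i ≠ 0)
    (I : ℝ → ℝ)
    (hI : ∀ κ, I κ = ∫ y in (0:ℝ)..sstar,
        Real.exp (-κ * y) * y ^ n 1 * (y - sstar) ^ n r * (y - 2 * (n 1 : ℝ) - 2) *
          ∏ i ∈ Finset.Icc 2 (r - 1), (y + σ i) ^ n i) :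
    Filter.Tendsto (fun κ : ℝ => (-κ) ^ (n r + 1) * Real.exp (κ * sstar) * I κ)
      Filter.atBot
      (nhds ((Nat.factorial (n r) : ℝ) * (-1) ^ n r * sstar ^ n 1 *
        (2 * (n r : ℝ) + 2) * ∏ i ∈ Finset.Icc 2 (r - 1), (sstar + σ i) ^ n i)) ∧
    ∀ᶠ κ : ℝ in Filter.atBot,
      Real.sign (I κ) =
        Real.sign ((-1) ^ n r * ∏ i ∈ Finset.Icc 2 (r - 1), (sstar + σ i) ^ n i) := by
  have hs : 0 < sstar := by rw [hsstar]; positivity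
  set m := n r with hm
  set h : ℝ → ℝ := fun t => (-1:ℝ)^m * (sstar - t)^(n 1) * (sstar - t - 2*(n 1:ℝ) - 2) *
      ∏ i ∈ Finset.Icc 2 (r - 1), (sstar - t + σ i) ^ n i with hh
  have hc : Continuous h := by
    apply Continuous.mul
    · fun_prop
    · exact continuous_finset_prod _ fun i _ => by fun_prop
  -- pointwise integral identity
  have hEq : ∀ κ : ℝ, (-κ) ^ (m + 1) * Real.exp (κ * sstar) * I κ
      = (-κ) ^ (m+1) * ∫ t in (0:ℝ)..sstar, Real.exp (-(-κ*t)) * t^m * h t := by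
    intro κ
    rw [hI, mul_assoc]
    congr 1
    set F : ℝ → ℝ := fun t => Real.exp (-(-κ*t)) * t^m * h t with hFdef
    have hsub : (∫ y in (0:ℝ)..sstar, F (sstar - y)) = ∫ t in (0:ℝ)..sstar, F t := by
      rw [intervalIntegral.integral_comp_sub_left F sstar]
      norm_num
    rw [← hsub, ← intervalIntegral.integral_const_mul]
    apply intervalIntegral.integral_congr
    intro y _
    simp only [hFdef, hh]
    have h1 : sstar - (sstar - y) = y := by ring
    rw [h1]
    have h2 : Real.exp (-(-κ*(sstar - y))) = Real.exp (κ * sstar) * Real.exp (-κ * y) := by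
      rw [← Real.exp_add]; ring_nf
    rw [h2]
    have h3 : (sstar - y)^m * (-1:ℝ)^m = (y - sstar)^m := by
      rw [← mul_pow]; ring_nf
    rw [← h3]
    ring
  -- the limit
  have hlim := (watson_aux sstar hs m h hc).comp
    (tendsto_neg_atBot_atTop (G := ℝ))
  have hh0 : (m.factorial : ℝ) * h 0 = (Nat.factorial m : ℝ) * (-1) ^ m * sstar ^ n 1 *
      (2 * (m : ℝ) + 2) * ∏ i ∈ Finset.Icc 2 (r - 1), (sstar + σ i) ^ n i := by
    simp only [hh, sub_zero, zero_add, add_zero]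
    have : sstar - 2*(n 1:ℝ) - 2 = 2*(m:ℝ) + 2 := by rw [hsstar]; ring
    rw [this]
    ring
  have hT : Filter.Tendsto (fun κ : ℝ => (-κ) ^ (m + 1) * Real.exp (κ * sstar) * I κ)
      Filter.atBot
      (nhds ((Nat.factorial m : ℝ) * (-1) ^ m * sstar ^ n 1 *
        (2 * (m : ℝ) + 2) * ∏ i ∈ Finset.Icc 2 (r - 1), (sstar + σ i) ^ n i)) := by
    rw [← hh0]
    apply Tendsto.congr _ hlim
    intro κ
    exact (hEq κ).symm
  refine ⟨hT, ?_⟩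
  -- sign part
  set P := ∏ i ∈ Finset.Icc 2 (r - 1), (sstar + σ i) ^ n i with hP
  have hPne : P ≠ 0 := Finset.prod_ne_zero_iff.2 fun i hi => pow_ne_zero _ (hσ i hi)
  set B : ℝ := (-1:ℝ)^m * P with hB
  have hBne : B ≠ 0 := mul_ne_zero (pow_ne_zero _ (by norm_num)) hPne
  have hA : (0:ℝ) < (Nat.factorial m : ℝ) * sstar ^ n 1 * (2 * (m : ℝ) + 2) := by positivity
  have hL : (Nat.factorial m : ℝ) * (-1) ^ m * sstar ^ n 1 * (2 * (m : ℝ) + 2) * P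
      = ((Nat.factorial m : ℝ) * sstar ^ n 1 * (2 * (m : ℝ) + 2)) * B := by
    rw [hB]; ring
  rcases hBne.lt_or_gt with hBneg | hBpos
  · have hLneg : (Nat.factorial m : ℝ) * (-1) ^ m * sstar ^ n 1 * (2 * (m : ℝ) + 2) * P < 0 := by
      rw [hL]; exact mul_neg_of_pos_of_neg hA hBneg
    filter_upwards [hT.eventually (eventually_lt_nhds hLneg), eventually_lt_atBot (0:ℝ)]
      with κ h1 h2
    have hIneg : I κ < 0 := by
      by_contra hcon
      push_neg at hcon
      have : 0 ≤ (-κ) ^ (m + 1) * Real.exp (κ * sstar) * I κ :=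
        mul_nonneg (mul_nonneg (pow_nonneg (by linarith) _) (Real.exp_nonneg _)) hcon
      linarith
    rw [Real.sign_of_neg hIneg, Real.sign_of_neg hBneg]
  · have hLpos : 0 < (Nat.factorial m : ℝ) * (-1) ^ m * sstar ^ n 1 * (2 * (m : ℝ) + 2) * P := by
      rw [hL]; positivity
    filter_upwards [hT.eventually (eventually_gt_nhds hLpos), eventually_lt_atBot (0:ℝ)]
      with κ h1 h2
    have hIpos : 0 < I κ := by
      by_contra hcon
      push_neg at hcon
      have : (-κ) ^ (m + 1) * Real.exp (κ * sstar) * I κ ≤ 0 :=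
        mul_nonpos_of_nonneg_of_nonpos
          (mul_nonneg (pow_nonneg (by linarith) _) (Real.exp_nonneg _)) hcon
      linarith
    rw [Real.sign_of_pos hIpos, Real.sign_of_pos hBpos]
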